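/- Let X be a complex Banach space and let T ∈ L(X). Then π(T) is Drazin invertible in the algebra C₀(X) = L(X)/F₀(X) if and only if π(T) is both left Drazin invertible and right Drazin invertible in C₀(X). -/

import Mathlib

noncomputable section

/-- The two-sided ideal `F₀(X)` of finite-rank operators in `L(X)`. -/
def finiteRankIdeal (X : Type*) [NormedAddCommGroup X] [NormedSpace ℂ X] :
    TwoSidedIdeal (X →L[ℂ] X) :=
  TwoSidedIdeal.mk'
    {F : X →L[ℂ] X | FiniteDimensional ℂ (LinearMap.range F.toLinearMap)}
    (by
      show FiniteDimensional ℂ (LinearMap.range (0 : X →L[ℂ] X).toLinearMap)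
      rw [show LinearMap.range (0 : X →L[ℂ] X).toLinearMap = ⊥ by ext x; simp [eq_comm]]
      infer_instance)
    (by
      intro x y hx hy
      haveI : FiniteDimensional ℂ (LinearMap.range x.toLinearMap) := hx
      haveI : FiniteDimensional ℂ (LinearMap.range y.toLinearMap) := hy
      have hle : LinearMap.range (x + y).toLinearMap ≤ LinearMap.range x.toLinearMap ⊔ LinearMap.range y.toLinearMap := by
        rintro z ⟨w, rfl⟩
        exact Submodule.add_mem_sup (LinearMap.mem_range_self x.toLinearMap w) (LinearMap.mem_range_self y.toLinearMap w)
      exact Submodule.finiteDimensional_of_le hle)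
    (by
      intro x hx
      haveI : FiniteDimensional ℂ (LinearMap.range x.toLinearMap) := hx
      have hle : LinearMap.range (-x).toLinearMap ≤ LinearMap.range x.toLinearMap := by
        rintro z ⟨w, rfl⟩; exact ⟨-w, by simp⟩
      exact Submodule.finiteDimensional_of_le hle)
    (by
      intro x y hy
      haveI : FiniteDimensional ℂ (LinearMap.range y.toLinearMap) := hy
      haveI : FiniteDimensional ℂ (Submodule.map (x : X →ₗ[ℂ] X) (LinearMap.range y.toLinearMap)) :=
        Module.Finite.map _ _
      have hle : LinearMap.range (x * y).toLinearMap ≤ Submodule.map (x : X →ₗ[ℂ] X) (LinearMap.range y.toLinearMap) := by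
        rintro z ⟨w, rfl⟩; exact ⟨y w, LinearMap.mem_range_self y.toLinearMap w, rfl⟩
      exact Submodule.finiteDimensional_of_le hle)
    (by
      intro x y hx
      haveI : FiniteDimensional ℂ (LinearMap.range x.toLinearMap) := hx
      have hle : LinearMap.range (x * y).toLinearMap ≤ LinearMap.range x.toLinearMap := by
        rintro z ⟨w, rfl⟩; exact ⟨y w, rfl⟩
      exact Submodule.finiteDimensional_of_le hle)

/-- Restriction of a bounded operator to an invariant subspace, as a bounded
operator on that subspace. -/
def clmRestrict {X : Type*} [NormedAddCommGroup X] [NormedSpace ℂ X]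
    (T : X →L[ℂ] X) (M : Submodule ℂ X) (h : ∀ x ∈ M, T x ∈ M) : M →L[ℂ] M where
  toLinearMap := (T : X →ₗ[ℂ] X).restrict h
  cont := by
    show Continuous fun x : M => (⟨T x, h x x.2⟩ : M)
    exact Continuous.subtype_mk (T.continuous.comp continuous_subtype_val) _

/-- The set `Δ(T)` of stable iteration indices:
`Δ(T) = {n : ∀ m ≥ n, N(T) ∩ R(T^n) ⊆ N(T) ∩ R(T^m)}`. -/
def disSet {X : Type*} [NormedAddCommGroup X] [NormedSpace ℂ X] (T : X →L[ℂ] X) : Set ℕ :=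
  {n | ∀ m, n ≤ m →
    (LinearMap.ker T.toLinearMap ⊓ LinearMap.range (T ^ n).toLinearMap : Submodule ℂ X) ≤
      LinearMap.ker T.toLinearMap ⊓ LinearMap.range (T ^ m).toLinearMap}

/-- `T` is quasi-Fredholm of degree `d` : `dis(T) = d` (i.e. `d` is the least element of
`Δ(T)`), `N(T) ∩ R(T^d)` is a closed complemented subspace of `X`, and `R(T) + N(T^d)` is a
closed complemented subspace of `X`. -/
def IsQuasiFredholmOfDegree {X : Type*} [NormedAddCommGroup X] [NormedSpace ℂ X]
    (T : X →L[ℂ] X) (d : ℕ) : Prop :=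
  IsLeast (disSet T) d ∧
    IsClosed ((LinearMap.ker T.toLinearMap ⊓ LinearMap.range (T ^ d).toLinearMap : Submodule ℂ X) : Set X) ∧
    (LinearMap.ker T.toLinearMap ⊓ LinearMap.range (T ^ d).toLinearMap).ClosedComplemented ∧
    IsClosed ((LinearMap.range T.toLinearMap ⊔ LinearMap.ker (T ^ d).toLinearMap : Submodule ℂ X) : Set X) ∧
    (LinearMap.range T.toLinearMap ⊔ LinearMap.ker (T ^ d).toLinearMap).ClosedComplemented

/-- `T` is quasi-Fredholm if it is quasi-Fredholm of some degree `d`. -/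
def IsQuasiFredholm {X : Type*} [NormedAddCommGroup X] [NormedSpace ℂ X]
    (T : X →L[ℂ] X) : Prop :=
  ∃ d : ℕ, IsQuasiFredholmOfDegree T d

/-- Left semi-Fredholm: closed range, finite-dimensional kernel, and range complemented
(i.e. the range of a bounded projection). -/
def IsLeftSemiFredholm {Y : Type*} [NormedAddCommGroup Y] [NormedSpace ℂ Y]
    (S : Y →L[ℂ] Y) : Prop :=
  IsClosed ((LinearMap.range S.toLinearMap : Submodule ℂ Y) : Set Y) ∧
    FiniteDimensional ℂ (LinearMap.ker S.toLinearMap) ∧ (LinearMap.range S.toLinearMap).ClosedComplemented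

/-- Right semi-Fredholm: closed range of finite codimension, and kernel complemented
(i.e. the range of a bounded projection). -/
def IsRightSemiFredholm {Y : Type*} [NormedAddCommGroup Y] [NormedSpace ℂ Y]
    (S : Y →L[ℂ] Y) : Prop :=
  IsClosed ((LinearMap.range S.toLinearMap : Submodule ℂ Y) : Set Y) ∧
    FiniteDimensional ℂ (Y ⧸ LinearMap.range S.toLinearMap) ∧ (LinearMap.ker S.toLinearMap).ClosedComplemented

/-- Fredholm: closed range, finite-dimensional kernel, range of finite codimension. -/
def IsFredholmOp {Y : Type*} [NormedAddCommGroup Y] [NormedSpace ℂ Y]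
    (S : Y →L[ℂ] Y) : Prop :=
  IsClosed ((LinearMap.range S.toLinearMap : Submodule ℂ Y) : Set Y) ∧
    FiniteDimensional ℂ (LinearMap.ker S.toLinearMap) ∧ FiniteDimensional ℂ (Y ⧸ LinearMap.range S.toLinearMap)

/-- Regular operator: kernel and range are complemented (closed) subspaces. -/
def IsRegularOp {Y : Type*} [NormedAddCommGroup Y] [NormedSpace ℂ Y]
    (S : Y →L[ℂ] Y) : Prop :=
  (LinearMap.ker S.toLinearMap).ClosedComplemented ∧ (LinearMap.range S.toLinearMap).ClosedComplemented

lemma range_pow_invariant {X : Type*} [NormedAddCommGroup X] [NormedSpace ℂ X]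
    (T : X →L[ℂ] X) (n : ℕ) :
    ∀ x ∈ LinearMap.range (T ^ n).toLinearMap, T x ∈ LinearMap.range (T ^ n).toLinearMap := by
  rintro x ⟨y, rfl⟩
  exact ⟨T y, by
    show (T ^ n * T) y = (T * T ^ n) y
    rw [← pow_succ, ← pow_succ']⟩

/-- B-Fredholm: for some `n`, `R(T^n)` is closed and the restriction of `T` to `R(T^n)`,
viewed as an operator from `R(T^n)` to `R(T^n)`, is a Fredholm operator. -/
def IsBFredholm {X : Type*} [NormedAddCommGroup X] [NormedSpace ℂ X]
    (T : X →L[ℂ] X) : Prop :=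
  ∃ n : ℕ, IsClosed ((LinearMap.range (T ^ n).toLinearMap : Submodule ℂ X) : Set X) ∧
    IsFredholmOp (clmRestrict T (LinearMap.range (T ^ n).toLinearMap) (range_pow_invariant T n))

/-- Left Drazin invertible element of a unital ring: there is an idempotent `p`
commuting with `a` such that `a * p` is nilpotent and `a + p` has a left inverse
commuting with `p`. -/
def IsLeftDrazinInvertible {A : Type*} [Ring A] (a : A) : Prop :=
  ∃ p : A, IsIdempotentElem p ∧ a * p = p * a ∧ IsNilpotent (a * p) ∧
    ∃ b : A, b * (a + p) = 1 ∧ b * p = p * b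

/-- Right Drazin invertible element of a unital ring: there is an idempotent `p`
commuting with `a` such that `a * p` is nilpotent and `a + p` has a right inverse
commuting with `p`. -/
def IsRightDrazinInvertible {A : Type*} [Ring A] (a : A) : Prop :=
  ∃ p : A, IsIdempotentElem p ∧ a * p = p * a ∧ IsNilpotent (a * p) ∧
    ∃ b : A, (a + p) * b = 1 ∧ b * p = p * b

/-- Drazin invertible element of a unital ring: there is an idempotent `p`
commuting with `a` such that `a * p` is nilpotent and `a + p` is invertible. -/
def IsDrazinInvertible {A : Type*} [Ring A] (a : A) : Prop :=
  ∃ p : A, IsIdempotentElem p ∧ a * p = p * a ∧ IsNilpotent (a * p) ∧ IsUnit (a + p)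

end

section DrazinAux2

variable {A : Type*} [Ring A]

private lemma drazin_to_left' {a : A}
    (h : ∃ p : A, IsIdempotentElem p ∧ a * p = p * a ∧ IsNilpotent (a * p) ∧ IsUnit (a + p)) :
    ∃ p : A, IsIdempotentElem p ∧ a * p = p * a ∧ IsNilpotent (a * p) ∧
      ∃ b : A, b * (a + p) = 1 ∧ b * p = p * b := by
  obtain ⟨p, hp, hc, hn, hu⟩ := h
  obtain ⟨u, hu'⟩ := hu
  have hpc : p * (a + p) = (a + p) * p := by
    rw [mul_add, add_mul, ← hc, hp.eq]
  refine ⟨p, hp, hc, hn, ↑u⁻¹, by rw [← hu']; exact u.inv_mul, ?_⟩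
  calc (↑u⁻¹ : A) * p = ↑u⁻¹ * p * (↑u * ↑u⁻¹) := by rw [u.mul_inv, mul_one]
    _ = ↑u⁻¹ * (p * ↑u) * ↑u⁻¹ := by rw [mul_assoc, mul_assoc, mul_assoc]
    _ = ↑u⁻¹ * (↑u * p) * ↑u⁻¹ := by rw [hu', hpc]
    _ = p * ↑u⁻¹ := by rw [← mul_assoc, u.inv_mul, one_mul]

private lemma drazin_to_right' {a : A}
    (h : ∃ p : A, IsIdempotentElem p ∧ a * p = p * a ∧ IsNilpotent (a * p) ∧ IsUnit (a + p)) :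
    ∃ p : A, IsIdempotentElem p ∧ a * p = p * a ∧ IsNilpotent (a * p) ∧
      ∃ b : A, (a + p) * b = 1 ∧ b * p = p * b := by
  obtain ⟨p, hp, hc, hn, hu⟩ := h
  obtain ⟨u, hu'⟩ := hu
  have hpc : p * (a + p) = (a + p) * p := by
    rw [mul_add, add_mul, ← hc, hp.eq]
  refine ⟨p, hp, hc, hn, ↑u⁻¹, by rw [← hu']; exact u.mul_inv, ?_⟩
  calc (↑u⁻¹ : A) * p = ↑u⁻¹ * p * (↑u * ↑u⁻¹) := by rw [u.mul_inv, mul_one]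
    _ = ↑u⁻¹ * (p * ↑u) * ↑u⁻¹ := by rw [mul_assoc, mul_assoc, mul_assoc]
    _ = ↑u⁻¹ * (↑u * p) * ↑u⁻¹ := by rw [hu', hpc]
    _ = p * ↑u⁻¹ := by rw [← mul_assoc, u.inv_mul, one_mul]

private lemma left_pow' {a : A}
    (h : ∃ p : A, IsIdempotentElem p ∧ a * p = p * a ∧ IsNilpotent (a * p) ∧
      ∃ b : A, b * (a + p) = 1 ∧ b * p = p * b) :
    ∃ n x, 1 ≤ n ∧ a ^ n = x * a ^ (n + 1) := by
  obtain ⟨p, hp, hc, ⟨N, hN⟩, b, hb, hbp⟩ := h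
  have hcomm : Commute a p := hc
  have hba : b * a = 1 - b * p := by
    have h1 : b * a + b * p = 1 := by rw [← mul_add]; exact hb
    exact eq_sub_of_add_eq h1
  have key : b * (1 - p) * a = 1 - p := by
    have hbpa : b * (p * a) = p - b * p := by
      rw [← hc, ← mul_assoc, hba, sub_mul, one_mul, mul_assoc, hp.eq]
    calc b * (1 - p) * a = b * a - b * (p * a) := by
          rw [mul_sub, mul_one, sub_mul, mul_assoc]
      _ = (1 - b * p) - (p - b * p) := by rw [hba, hbpa]
      _ = 1 - p := by abel
  have hap : a ^ (N + 1) * p = 0 := by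
    have h2 : (a * p) ^ (N + 1) = 0 := by rw [pow_succ, hN, zero_mul]
    rwa [hcomm.mul_pow, IsIdempotentElem.pow_succ_eq N hp] at h2
  have hfix : (1 - p) * a ^ (N + 1) = a ^ (N + 1) := by
    have hc2 : Commute (1 - p) (a ^ (N + 1)) :=
      ((Commute.one_left a).sub_left hcomm.symm).pow_right _
    rw [hc2.eq, mul_sub, mul_one, hap, sub_zero]
  refine ⟨N + 1, b * (1 - p), by omega, ?_⟩
  calc a ^ (N + 1) = (1 - p) * a ^ (N + 1) := hfix.symm
    _ = b * (1 - p) * a * a ^ (N + 1) := by rw [key]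
    _ = b * (1 - p) * a ^ (N + 1 + 1) := by rw [mul_assoc, ← pow_succ']

private lemma right_pow' {a : A}
    (h : ∃ p : A, IsIdempotentElem p ∧ a * p = p * a ∧ IsNilpotent (a * p) ∧
      ∃ b : A, (a + p) * b = 1 ∧ b * p = p * b) :
    ∃ n y, 1 ≤ n ∧ a ^ n = a ^ (n + 1) * y := by
  obtain ⟨p, hp, hc, ⟨N, hN⟩, b, hb, hbp⟩ := h
  have hcomm : Commute a p := hc
  have hab : a * b = 1 - p * b := by
    have h1 : a * b + p * b = 1 := by rw [← add_mul]; exact hb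
    exact eq_sub_of_add_eq h1
  have key : a * ((1 - p) * b) = 1 - p := by
    have hpab : p * (a * b) = p - p * b := by
      rw [hab, mul_sub, mul_one, ← mul_assoc, hp.eq]
    calc a * ((1 - p) * b) = a * b - (a * p) * b := by
          rw [sub_mul, one_mul, mul_sub, ← mul_assoc]
      _ = a * b - p * (a * b) := by rw [hc, mul_assoc]
      _ = (1 - p * b) - (p - p * b) := by rw [hpab, hab]
      _ = 1 - p := by abel
  have hap : a ^ (N + 1) * p = 0 := by
    have h2 : (a * p) ^ (N + 1) = 0 := by rw [pow_succ, hN, zero_mul]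
    rwa [hcomm.mul_pow, IsIdempotentElem.pow_succ_eq N hp] at h2
  have hfix : a ^ (N + 1) * (1 - p) = a ^ (N + 1) := by
    rw [mul_sub, mul_one, hap, sub_zero]
  refine ⟨N + 1, (1 - p) * b, by omega, ?_⟩
  calc a ^ (N + 1) = a ^ (N + 1) * (1 - p) := hfix.symm
    _ = a ^ (N + 1) * (a * ((1 - p) * b)) := by rw [key]
    _ = a ^ (N + 1 + 1) * ((1 - p) * b) := by rw [← mul_assoc, ← pow_succ]

private lemma both_to_drazin' {a : A}
    (hl : ∃ n x, 1 ≤ n ∧ a ^ n = x * a ^ (n + 1))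
    (hr : ∃ m y, 1 ≤ m ∧ a ^ m = a ^ (m + 1) * y) :
    ∃ p : A, IsIdempotentElem p ∧ a * p = p * a ∧ IsNilpotent (a * p) ∧ IsUnit (a + p) := by
  obtain ⟨n₀, x, hn₀, hx₀⟩ := hl
  obtain ⟨m₀, y, hm₀, hy₀⟩ := hr
  set n := max n₀ m₀ with hndef
  have hn1 : 1 ≤ n := le_trans hn₀ (le_max_left _ _)
  have hx : a ^ n = x * a ^ (n + 1) := by
    have h := le_max_left n₀ m₀
    have e1 : n₀ + 1 + (n - n₀) = n + 1 := by omega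
    calc a ^ n = a ^ n₀ * a ^ (n - n₀) := by rw [← pow_add, Nat.add_sub_cancel' h]
      _ = x * a ^ (n₀ + 1) * a ^ (n - n₀) := by rw [hx₀]
      _ = x * a ^ (n + 1) := by rw [mul_assoc, ← pow_add, e1]
  have hy : a ^ n = a ^ (n + 1) * y := by
    have h := le_max_right n₀ m₀
    have e1 : n - m₀ + (m₀ + 1) = n + 1 := by omega
    calc a ^ n = a ^ (n - m₀) * a ^ m₀ := by rw [← pow_add, Nat.sub_add_cancel h]
      _ = a ^ (n - m₀) * (a ^ (m₀ + 1) * y) := by rw [hy₀]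
      _ = a ^ (n + 1) * y := by rw [← mul_assoc, ← pow_add, e1]
  have hyA : ∀ z : A, a ^ (n + 1) * (y * z) = a ^ n * z := fun z => by
    rw [← mul_assoc, ← hy]
  have hxA : ∀ z : A, x * (a ^ (n + 1) * z) = a ^ n * z := fun z => by
    rw [← mul_assoc, ← hx]
  have key : x * a ^ n = a ^ n * y := by
    conv_lhs => rw [hy]
    rw [← mul_assoc, ← hx]
  have xj : ∀ j, x ^ j * a ^ n = a ^ n * y ^ j := by
    intro j; induction j with
    | zero => simp
    | succ j ih =>
      rw [pow_succ x j, pow_succ y j, mul_assoc, key, ← mul_assoc, ih, mul_assoc]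
  have hyj : ∀ j, a ^ (n + j) * y ^ j = a ^ n := by
    intro j; induction j with
    | zero => simp
    | succ j ih =>
      have e1 : n + (j + 1) = j + (n + 1) := by omega
      rw [e1, pow_add a j (n + 1), pow_succ' y j, mul_assoc, hyA, ← mul_assoc,
        ← pow_add, Nat.add_comm j n]
      exact ih
  have inner2 : a ^ n * (a ^ n * y ^ n) = a ^ n := by
    rw [← mul_assoc, ← pow_add]; exact hyj n
  have innerD : a ^ n * (a ^ n * y ^ (n + 1)) = a ^ n * y := by
    rw [← mul_assoc, ← pow_add, pow_succ y n, ← mul_assoc, hyj n]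
  -- e := a^n * y^n, d := a^n * y^(n+1)
  have hE1 : a * (a ^ n * y ^ (n + 1)) = a ^ n * y ^ n := by
    rw [← mul_assoc, ← pow_succ' a n, pow_succ' y n, hyA]
  have hE2 : (a ^ n * y ^ (n + 1)) * a = a ^ n * y ^ n := by
    rw [← xj (n + 1), mul_assoc, ← pow_succ, pow_succ x n, mul_assoc, ← hx, xj n]
  have hED : (a ^ n * y ^ n) * (a ^ n * y ^ (n + 1)) = a ^ n * y ^ (n + 1) := by
    nth_rewrite 1 [← xj n]
    rw [mul_assoc, innerD, ← mul_assoc, xj n, mul_assoc, ← pow_succ]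
  have hDE : (a ^ n * y ^ (n + 1)) * (a ^ n * y ^ n) = a ^ n * y ^ (n + 1) := by
    rw [← xj (n + 1), mul_assoc, inner2]
  have hee : IsIdempotentElem (a ^ n * y ^ n) := by
    show (a ^ n * y ^ n) * (a ^ n * y ^ n) = a ^ n * y ^ n
    nth_rewrite 1 [← xj n]
    rw [mul_assoc, inner2, xj n]
  have hae : a * (a ^ n * y ^ n) = (a ^ n * y ^ n) * a := by
    calc a * (a ^ n * y ^ n) = a * ((a ^ n * y ^ (n + 1)) * a) := by rw [hE2]
      _ = (a * (a ^ n * y ^ (n + 1))) * a := by rw [← mul_assoc]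
      _ = (a ^ n * y ^ n) * a := by rw [hE1]
  have hcap : Commute a (1 - a ^ n * y ^ n) :=
    (Commute.one_right a).sub_right hae
  have hp : IsIdempotentElem (1 - a ^ n * y ^ n) := hee.one_sub
  have pow_of_idem : ∀ q : A, IsIdempotentElem q → q ^ n = q := fun q hq => by
    rw [show n = (n - 1) + 1 by omega]; exact IsIdempotentElem.pow_succ_eq _ hq
  have hpn : (1 - a ^ n * y ^ n) ^ n = 1 - a ^ n * y ^ n := pow_of_idem _ hp
  have hapn : (a * (1 - a ^ n * y ^ n)) ^ n = 0 := by
    calc (a * (1 - a ^ n * y ^ n)) ^ n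
        = a ^ n * (1 - a ^ n * y ^ n) ^ n := hcap.mul_pow n
      _ = a ^ n * (1 - a ^ n * y ^ n) := by rw [hpn]
      _ = 0 := by rw [mul_sub, mul_one, inner2, sub_self]
  have hpd : (1 - a ^ n * y ^ n) * (a ^ n * y ^ (n + 1)) = 0 := by
    rw [sub_mul, one_mul, hED, sub_self]
  have hdp : (a ^ n * y ^ (n + 1)) * (1 - a ^ n * y ^ n) = 0 := by
    rw [mul_sub, mul_one, hDE, sub_self]
  have u1 : (a + (1 - a ^ n * y ^ n)) * ((a ^ n * y ^ (n + 1)) + (1 - a ^ n * y ^ n))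
      = 1 + a * (1 - a ^ n * y ^ n) := by
    rw [add_mul, mul_add, mul_add, hE1, hpd, hp.eq]
    abel
  have u2 : ((a ^ n * y ^ (n + 1)) + (1 - a ^ n * y ^ n)) * (a + (1 - a ^ n * y ^ n))
      = 1 + a * (1 - a ^ n * y ^ n) := by
    rw [add_mul, mul_add, mul_add, hE2, hdp, hp.eq, ← hcap.eq]
    abel
  have hnil : IsNilpotent (a * (1 - a ^ n * y ^ n)) := ⟨n, hapn⟩
  obtain ⟨v, hv⟩ := hnil.isUnit_one_add
  refine ⟨1 - a ^ n * y ^ n, hp, hcap.eq, hnil, ?_⟩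
  have r1 : (a + (1 - a ^ n * y ^ n)) *
      (((a ^ n * y ^ (n + 1)) + (1 - a ^ n * y ^ n)) * ↑v⁻¹) = 1 := by
    rw [← mul_assoc, u1, ← hv, v.mul_inv]
  have r2 : (↑v⁻¹ * ((a ^ n * y ^ (n + 1)) + (1 - a ^ n * y ^ n))) *
      (a + (1 - a ^ n * y ^ n)) = 1 := by
    rw [mul_assoc, u2, ← hv, v.inv_mul]
  have heq : (↑v⁻¹ : A) * ((a ^ n * y ^ (n + 1)) + (1 - a ^ n * y ^ n))
      = ((a ^ n * y ^ (n + 1)) + (1 - a ^ n * y ^ n)) * ↑v⁻¹ := by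
    calc (↑v⁻¹ : A) * ((a ^ n * y ^ (n + 1)) + (1 - a ^ n * y ^ n))
        = ↑v⁻¹ * ((a ^ n * y ^ (n + 1)) + (1 - a ^ n * y ^ n)) *
            ((a + (1 - a ^ n * y ^ n)) *
              (((a ^ n * y ^ (n + 1)) + (1 - a ^ n * y ^ n)) * ↑v⁻¹)) := by
          rw [r1, mul_one]
      _ = (↑v⁻¹ * ((a ^ n * y ^ (n + 1)) + (1 - a ^ n * y ^ n)) *
            (a + (1 - a ^ n * y ^ n))) *
            (((a ^ n * y ^ (n + 1)) + (1 - a ^ n * y ^ n)) * ↑v⁻¹) := by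
          rw [← mul_assoc]
      _ = ((a ^ n * y ^ (n + 1)) + (1 - a ^ n * y ^ n)) * ↑v⁻¹ := by
          rw [r2, one_mul]
  exact ⟨⟨a + (1 - a ^ n * y ^ n),
    ((a ^ n * y ^ (n + 1)) + (1 - a ^ n * y ^ n)) * ↑v⁻¹, r1,
    by rw [← heq]; exact r2⟩, rfl⟩

end DrazinAux2

/-- `π(T)` is Drazin invertible in `C₀(X) = L(X)/F₀(X)` iff it is both left
and right Drazin invertible there. -/
theorem drazinInvertible_iff_left_and_right_in_C0
    (X : Type*) [NormedAddCommGroup X] [NormedSpace ℂ X] [CompleteSpace X]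
    (T : X →L[ℂ] X) :
    IsDrazinInvertible ((finiteRankIdeal X).ringCon.toQuotient T) ↔
      IsLeftDrazinInvertible ((finiteRankIdeal X).ringCon.toQuotient T) ∧
        IsRightDrazinInvertible ((finiteRankIdeal X).ringCon.toQuotient T) := by
  constructor
  · intro h
    exact ⟨drazin_to_left' h, drazin_to_right' h⟩
  · rintro ⟨hl, hr⟩
    exact both_to_drazin' (left_pow' hl) (right_pow' hr)
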